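/- In the Gaussian linear bivariate case (features x₁, x₂ aggregated to x̄ = (x₁+x₂)/2, target y = w₁x₁ + w₂x₂ + ε, ε ~ N(0,σ²)), the asymptotic expected value E[y·(w₁x₁ + w₂x₂ − w̄·x̄)] with w̄ = 2(w₁σ²_{x₁} + w₂σ²_{x₂} + (w₁+w₂)cov(x₁,x₂))/(σ²_{x₁} + σ²_{x₂} + 2cov(x₁,x₂)) equals w₁²σ²_{x₁} + w₂²σ²_{x₂} + 2w₁w₂cov(x₁,x₂) − (w₁σ²_{x₁} + w₂σ²_{x₂} + (w₁+w₂)cov(x₁,x₂))²/(σ²_{x₁} + σ²_{x₂} + 2cov(x₁,x₂)). -/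

import Mathlib

open MeasureTheory ProbabilityTheory

/-- Gaussian linear bivariate case: the asymptotic first expected value in the deviance
computation, `E[y·(w₁x₁ + w₂x₂ - w̄·x̄)]` with
`w̄ = 2(w₁σ²_{x₁} + w₂σ²_{x₂} + (w₁+w₂)cov(x₁,x₂))/σ²_{x₁+x₂}`, equals
`w₁²σ²_{x₁} + w₂²σ²_{x₂} + 2w₁w₂cov(x₁,x₂) - (w₁σ²_{x₁} + w₂σ²_{x₂} + (w₁+w₂)cov(x₁,x₂))²/σ²_{x₁+x₂}`. -/

private lemma l2_mul_int {Ω : Type*} [MeasurableSpace Ω] {μ : Measure Ω} {f g : Ω → ℝ}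
    (hf : MemLp f 2 μ) (hg : MemLp g 2 μ) : Integrable (fun ω => f ω * g ω) μ := by
  have h : MemLp (f • g) 1 μ := hg.smul hf
  exact memLp_one_iff_integrable.mp h

theorem stmt_17 {Ω : Type*} [MeasurableSpace Ω] (μ : Measure Ω) [IsProbabilityMeasure μ]
    (x1 x2 ε : Ω → ℝ) (w1 w2 : ℝ)
    (hx1 : MemLp x1 2 μ) (hx2 : MemLp x2 2 μ) (hε : MemLp ε 2 μ)
    (hmx1 : Measurable x1) (hmx2 : Measurable x2) (hmε : Measurable ε)
    (hm1 : ∫ ω, x1 ω ∂μ = 0) (hm2 : ∫ ω, x2 ω ∂μ = 0) (hmeps : ∫ ω, ε ω ∂μ = 0)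
    (hindep : ProbabilityTheory.IndepFun (fun ω => (x1 ω, x2 ω)) ε μ)
    (s1 s2 c T wbar : ℝ)
    (hs1 : s1 = variance x1 μ) (hs2 : s2 = variance x2 μ)
    (hc : c = ∫ ω, (x1 ω - ∫ ω', x1 ω' ∂μ) * (x2 ω - ∫ ω', x2 ω' ∂μ) ∂μ)
    (hT : T = s1 + s2 + 2 * c) (hTpos : 0 < T)
    (hwbar : wbar = 2 * (w1 * s1 + w2 * s2 + (w1 + w2) * c) / T) :
    ∫ ω, (w1 * x1 ω + w2 * x2 ω + ε ω)
        * (w1 * x1 ω + w2 * x2 ω - wbar * ((x1 ω + x2 ω) / 2)) ∂μ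
      = w1 ^ 2 * s1 + w2 ^ 2 * s2 + 2 * w1 * w2 * c
        - (w1 * s1 + w2 * s2 + (w1 + w2) * c) ^ 2 / T := by

  have hi11 : Integrable (fun ω => x1 ω * x1 ω) μ := l2_mul_int hx1 hx1
  have hi22 : Integrable (fun ω => x2 ω * x2 ω) μ := l2_mul_int hx2 hx2
  have hi12 : Integrable (fun ω => x1 ω * x2 ω) μ := l2_mul_int hx1 hx2
  have hie1 : Integrable (fun ω => ε ω * x1 ω) μ := l2_mul_int hε hx1
  have hie2 : Integrable (fun ω => ε ω * x2 ω) μ := l2_mul_int hε hx2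
  have hI1 : ∫ ω, x1 ω * x1 ω ∂μ = s1 := by
    rw [hs1, variance_eq_sub hx1, hm1]
    simp [pow_two]
  have hI2 : ∫ ω, x2 ω * x2 ω ∂μ = s2 := by
    rw [hs2, variance_eq_sub hx2, hm2]
    simp [pow_two]
  have hI12 : ∫ ω, x1 ω * x2 ω ∂μ = c := by
    rw [hc, hm1, hm2]; simp
  have hind1 : IndepFun ε x1 μ :=
    (hindep.comp measurable_fst measurable_id).symm
  have hind2 : IndepFun ε x2 μ :=
    (hindep.comp measurable_snd measurable_id).symm
  have hE1 : ∫ ω, ε ω * x1 ω ∂μ = 0 := by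
    have h := hind1.integral_mul_eq_mul_integral hmε.aestronglyMeasurable hmx1.aestronglyMeasurable
    simpa [hmeps] using h
  have hE2 : ∫ ω, ε ω * x2 ω ∂μ = 0 := by
    have h := hind2.integral_mul_eq_mul_integral hmε.aestronglyMeasurable hmx2.aestronglyMeasurable
    simpa [hmeps] using h
  have key : (fun ω => (w1 * x1 ω + w2 * x2 ω + ε ω)
        * (w1 * x1 ω + w2 * x2 ω - wbar * ((x1 ω + x2 ω) / 2)))
      = fun ω => (w1 * (w1 - wbar / 2)) * (x1 ω * x1 ω)
        + (w2 * (w2 - wbar / 2)) * (x2 ω * x2 ω)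
        + (w1 * (w2 - wbar / 2) + w2 * (w1 - wbar / 2)) * (x1 ω * x2 ω)
        + (w1 - wbar / 2) * (ε ω * x1 ω)
        + (w2 - wbar / 2) * (ε ω * x2 ω) := by
    funext ω; ring
  rw [key, integral_add, integral_add, integral_add, integral_add,
    integral_const_mul, integral_const_mul, integral_const_mul, integral_const_mul,
    integral_const_mul, hI1, hI2, hI12, hE1, hE2]
  · rw [hwbar, hT]
    have hT0 : s1 + s2 + 2 * c ≠ 0 := by rw [hT] at hTpos; linarith
    field_simp
    ring
  · exact hi11.const_mul _
  · exact hi22.const_mul _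
  · exact (hi11.const_mul _).add (hi22.const_mul _)
  · exact hi12.const_mul _
  · exact ((hi11.const_mul _).add (hi22.const_mul _)).add (hi12.const_mul _)
  · exact hie1.const_mul _
  · exact (((hi11.const_mul _).add (hi22.const_mul _)).add (hi12.const_mul _)).add (hie1.const_mul _)
  · exact hie2.const_mul _
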